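/- Let W be a finite-dimensional real vector space and (T_n) a sequence of random affine maps on W whose linear parts satisfy ‖Lin(T_n)‖ → 0 in probability. Then for any two probability measures ν₁, ν₂ on W and any compactly supported continuous f : W → ℝ, the difference ∫ f(T_n t) dν₁(t) − ∫ f(T_n t) dν₂(t) converges to 0 in L¹ (with respect to the underlying probability space). -/

import Mathlib

set_option linter.unusedSectionVars false
set_option linter.unusedVariables false

open MeasureTheory Filter Topology Metric ProbabilityTheory Classical

noncomputable section

variable (V : Type*) [NormedAddCommGroup V] [NormedSpace ℝ V] [FiniteDimensional ℝ V]

/-- The general linear group of `V`, realized as units of continuous linear endomorphisms. -/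
abbrev GLV := (V →L[ℝ] V)ˣ

variable {V}

lemma gl_injective (g : GLV V) : Function.Injective fun v : V => g.val v := by
  intro x y h
  have h2 : (↑g⁻¹ : V →L[ℝ] V) (g.val x) = (↑g⁻¹ : V →L[ℝ] V) (g.val y) := congrArg _ h
  rwa [← ContinuousLinearMap.mul_apply, ← ContinuousLinearMap.mul_apply, Units.inv_mul,
    ContinuousLinearMap.one_apply, ContinuousLinearMap.one_apply] at h2

/-- The action of `GL(V)` on the projective space `P(V)`. -/
def act (g : GLV V) (x : Projectivization ℝ V) : Projectivization ℝ V :=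
  Projectivization.map ((g.val : V →L[ℝ] V) : V →ₗ[ℝ] V) (fun _ _ h => gl_injective g h) x

instance : TopologicalSpace (Projectivization ℝ V) := instTopologicalSpaceQuotient
instance : MeasurableSpace (Projectivization ℝ V) := borel _
instance : MeasurableSpace (GLV V) := borel _

/-- The projectivization `[W] ⊆ P(V)` of a subspace `W ≤ V`. -/
def projSet (W : Submodule ℝ V) : Set (Projectivization ℝ V) := {x | x.rep ∈ W}

/-- Convolution of measures on `GL(V)`. -/
def mconv (μ₁ μ₂ : Measure (GLV V)) : Measure (GLV V) := (μ₁.prod μ₂).map fun p => p.1 * p.2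

/-- Convolution powers `μ^{*n}` of a measure on `GL(V)` (with `μ^{*0} = δ_id`). -/
def convPow (μ : Measure (GLV V)) : ℕ → Measure (GLV V)
  | 0 => Measure.dirac 1
  | n+1 => mconv μ (convPow μ n)

/-- Convolution `μ ∗ ν` of a measure `μ` on `GL(V)` with a measure `ν` on `P(V)`. -/
def conv (μ : Measure (GLV V)) (ν : Measure (Projectivization ℝ V)) :
    Measure (Projectivization ℝ V) :=
  (μ.prod ν).map fun p => act p.1 p.2

/-- `ν` is `μ`-stationary: `μ ∗ ν = ν`. -/
def IsStationaryGL (μ : Measure (GLV V)) (ν : Measure (Projectivization ℝ V)) : Prop :=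
  conv μ ν = ν

/-- The cocycle average `α(ν) = ∬ log (‖g v‖/‖v‖) dμ(g) dν([v])`. -/
def cocycleAvg (μ : Measure (GLV V)) (ν : Measure (Projectivization ℝ V)) : ℝ :=
  ∫ g, ∫ x, Real.log (‖g.val x.rep‖ / ‖x.rep‖) ∂ν ∂μ

/-- `ν` is `μ`-stationary and ergodic (extremal among stationary probability measures). -/
def IsErgodicStationary (μ : Measure (GLV V)) (ν : Measure (Projectivization ℝ V)) : Prop :=
  IsStationaryGL μ ν ∧ ∀ ν₁ ν₂ : Measure (Projectivization ℝ V), IsProbabilityMeasure ν₁ →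
    IsProbabilityMeasure ν₂ → IsStationaryGL μ ν₁ → IsStationaryGL μ ν₂ → ∀ t : ℝ, 0 < t → t < 1 →
      ν = ENNReal.ofReal t • ν₁ + ENNReal.ofReal (1 - t) • ν₂ → ν₁ = ν

/-- The left random-walk word `L_n = ω_{n-1} ⋯ ω_0`. -/
def word (ω : ℕ → GLV V) : ℕ → GLV V
  | 0 => 1
  | n+1 => ω n * word ω n

/-- The norm of the restriction of `g` to the subspace `W` (the `A`-block of `g`). -/
def opNormOn (W : Submodule ℝ V) (g : GLV V) : ℝ :=
  sSup ((fun w : V => ‖g.val w‖) '' {w | w ∈ W ∧ ‖w‖ ≤ 1})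

/-- `μ` has a finite first moment: `∫ log N(g) dμ(g) < ∞`, `N(g) = max (‖g‖, ‖g⁻¹‖)`. -/
def FirstMoment (μ : Measure (GLV V)) : Prop :=
  Integrable (fun g : GLV V =>
    Real.log (max ‖(g.val : V →L[ℝ] V)‖ ‖((g⁻¹).val : V →L[ℝ] V)‖)) μ

/-- `W` is `Γ_μ`-invariant (for a.e. `g`, `g W = W`). -/
def AEInv (μ : Measure (GLV V)) (W : Submodule ℝ V) : Prop :=
  ∀ᵐ g ∂μ, W.map ((g.val : V →L[ℝ] V) : V →ₗ[ℝ] V) = W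

/-- `(P, (ωₙ))` is an iid sequence of law `μ` on the Bernoulli space `(GLV V)^ℕ`. -/
def IsBernoulli (μ : Measure (GLV V)) (P : Measure (ℕ → GLV V)) : Prop :=
  iIndepFun (fun n (ω : ℕ → GLV V) => ω n) P ∧
    ∀ n, P.map (fun ω => ω n) = μ

/-- The projection `P(V) ∖ P(ker π) → P(Q)` induced by a surjection `π : V → Q`
(junk value on `P(ker π)`). -/
def projMapQ {Q : Type*} [NormedAddCommGroup Q] [NormedSpace ℝ Q] [Nontrivial Q]
    (π : V →ₗ[ℝ] Q) (x : Projectivization ℝ V) : Projectivization ℝ Q :=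
  if h : π x.rep ≠ 0 then Projectivization.mk ℝ (π x.rep) h
  else Projectivization.mk ℝ (Classical.choose (exists_ne (0 : Q)))
    (Classical.choose_spec (exists_ne (0 : Q)))

/-- The partially defined projection `P(V) ∖ P(U) → P(V/U)`, `Option`-valued. -/
def quotMapO (U : Submodule ℝ V) (x : Projectivization ℝ V) :
    Option (Projectivization ℝ (V ⧸ U)) :=
  if h : U.mkQ x.rep ≠ 0 then some (Projectivization.mk ℝ (U.mkQ x.rep) h) else none

/-- The linear span `F_ν` of the support of a measure `ν` on `P(V)`: the smallest
subspace whose projectivization has full measure. -/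
def spanOf (ν : Measure (Projectivization ℝ V)) : Submodule ℝ V :=
  sInf {U : Submodule ℝ V | ν (projSet U) = 1}

/-- The operator norm of the linear part of an affine self-map of `W`. -/
def affLinNorm {W : Type*} [NormedAddCommGroup W] [NormedSpace ℝ W]
    (T : W →ᵃ[ℝ] W) : ℝ :=
  sSup ((fun w => ‖T.linear w‖) '' Metric.closedBall (0 : W) 1)

lemma affLinNorm_bound' {W : Type*} [NormedAddCommGroup W] [NormedSpace ℝ W]
    [FiniteDimensional ℝ W] (T : W →ᵃ[ℝ] W) {v : W} (hv : ‖v‖ ≤ 1) :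
    ‖T.linear v‖ ≤ affLinNorm T := by
  apply le_csSup
  · have hc : IsCompact ((fun w => ‖T.linear w‖) '' Metric.closedBall (0 : W) 1) :=
      (isCompact_closedBall (0 : W) 1).image
        (continuous_norm.comp T.linear.continuous_of_finiteDimensional)
    exact hc.bddAbove
  · exact ⟨v, by simpa [Metric.mem_closedBall, dist_zero_right] using hv, rfl⟩

lemma affLinNorm_nonneg' {W : Type*} [NormedAddCommGroup W] [NormedSpace ℝ W]
    [FiniteDimensional ℝ W] (T : W →ᵃ[ℝ] W) : 0 ≤ affLinNorm T := by
  have := affLinNorm_bound' T (v := 0) (by simp)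
  simpa using this

lemma affLinNorm_mul_bound' {W : Type*} [NormedAddCommGroup W] [NormedSpace ℝ W]
    [FiniteDimensional ℝ W] (T : W →ᵃ[ℝ] W) (v : W) :
    ‖T.linear v‖ ≤ affLinNorm T * ‖v‖ := by
  rcases eq_or_ne v 0 with rfl | hv
  · simp
  · have hv' : (0:ℝ) < ‖v‖ := norm_pos_iff.2 hv
    have h1 : ‖(‖v‖⁻¹ • v)‖ ≤ 1 := by
      rw [norm_smul, Real.norm_eq_abs, abs_of_nonneg (inv_nonneg.2 hv'.le)]
      rw [inv_mul_cancel₀ hv'.ne']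
    have h2 := affLinNorm_bound' T h1
    rw [LinearMap.map_smul, norm_smul, Real.norm_eq_abs, abs_of_nonneg (inv_nonneg.2 hv'.le)] at h2
    have := mul_le_mul_of_nonneg_right h2 hv'.le
    rwa [inv_mul_eq_div, div_mul_cancel₀ _ hv'.ne'] at this

lemma tendsto_prob_compl_closedBall {W : Type*} [NormedAddCommGroup W] [NormedSpace ℝ W]
    [MeasurableSpace W] [BorelSpace W] (ν : Measure W) [IsProbabilityMeasure ν] :
    Tendsto (fun n : ℕ => ν (Metric.closedBall (0:W) n)ᶜ) atTop (𝓝 0) := by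
  have h := tendsto_measure_iInter_atTop (μ := ν)
    (s := fun n : ℕ => (Metric.closedBall (0:W) n)ᶜ)
    (fun n => (measurableSet_closedBall).compl.nullMeasurableSet)
    (fun n m hnm => Set.compl_subset_compl.2
      (Metric.closedBall_subset_closedBall (by exact_mod_cast hnm)))
    ⟨0, measure_ne_top _ _⟩
  have hempty : (⋂ n : ℕ, (Metric.closedBall (0:W) n)ᶜ) = ∅ := by
    rw [← Set.compl_iUnion, Set.compl_empty_iff]
    apply Set.eq_univ_iff_forall.2
    intro x
    obtain ⟨n, hn⟩ := exists_nat_ge ‖x‖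
    exact Set.mem_iUnion.2 ⟨n, by simpa [Metric.mem_closedBall, dist_zero_right] using hn⟩
  rw [show (fun n : ℕ => ν (Metric.closedBall (0:W) n)ᶜ) =
      ν ∘ (fun n : ℕ => (Metric.closedBall (0:W) n)ᶜ) from rfl]
  rw [hempty, measure_empty] at h
  exact h

/-- Lemma 4.4, abstract form. If the linear parts of random affine maps
T_n on W tend to 0 in probability, then for any two probability measures ν₁, ν₂ on W and
any f ∈ C_c(W), ∫ f(T_n t) dν₁(t) − ∫ f(T_n t) dν₂(t) → 0 in L¹. -/
theorem affine_contraction_in_probability_washes_out_initial_measure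
    {W : Type*} [NormedAddCommGroup W] [NormedSpace ℝ W] [FiniteDimensional ℝ W]
    [MeasurableSpace W] [BorelSpace W]
    {Ω : Type*} [MeasurableSpace Ω] (P : Measure Ω) [IsProbabilityMeasure P]
    (T : ℕ → Ω → (W →ᵃ[ℝ] W))
    (hT : ∀ ε > (0:ℝ), Tendsto (fun n => P {ω | ε ≤ affLinNorm (T n ω)}) atTop (𝓝 0))
    (ν₁ ν₂ : Measure W) [IsProbabilityMeasure ν₁] [IsProbabilityMeasure ν₂]
    (f : W → ℝ) (hf : Continuous f) (hfc : HasCompactSupport f) :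
    Tendsto (fun n => ∫ ω, |(∫ t, f (T n ω t) ∂ν₁) - ∫ t, f (T n ω t) ∂ν₂| ∂P)
      atTop (𝓝 0) := by
  obtain ⟨M, hM⟩ := hfc.exists_bound_of_continuous hf
  have hM0 : 0 ≤ M := le_trans (norm_nonneg _) (hM 0)
  have huc : UniformContinuous f :=
    hf.uniformContinuous_of_tendsto_cocompact hfc.is_zero_at_infty
  rw [Metric.tendsto_atTop]
  intro ε hε
  -- modulus of uniform continuity
  obtain ⟨δ, hδ0, hδ⟩ := Metric.uniformContinuous_iff.1 huc (ε/8) (by linarith)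
  -- tightness radius
  have hεM : (0:ℝ) < ε / (16 * (M + 1)) := by positivity
  have h1 := (tendsto_prob_compl_closedBall ν₁).eventually_lt_const
    (ENNReal.ofReal_pos.2 hεM)
  have h2 := (tendsto_prob_compl_closedBall ν₂).eventually_lt_const
    (ENNReal.ofReal_pos.2 hεM)
  obtain ⟨m, hm⟩ := (h1.and h2).exists_forall_of_atTop
  set R : ℝ := ((m + 1 : ℕ) : ℝ) with hRdef
  have hR0 : (0:ℝ) < R := by positivity
  have hRν₁ : ν₁ (Metric.closedBall (0:W) R)ᶜ ≤ ENNReal.ofReal (ε/(16*(M+1))) :=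
    (hm (m+1) (Nat.le_succ m)).1.le
  have hRν₂ : ν₂ (Metric.closedBall (0:W) R)ᶜ ≤ ENNReal.ofReal (ε/(16*(M+1))) :=
    (hm (m+1) (Nat.le_succ m)).2.le
  -- the good-ω estimate
  have key : ∀ n, ∀ ω : Ω, affLinNorm (T n ω) < δ / R →
      |(∫ t, f (T n ω t) ∂ν₁) - ∫ t, f (T n ω t) ∂ν₂| ≤ ε/2 := by
    intro n ω hω
    set g : W → ℝ := fun t => f (T n ω t) with hg
    have hg_cont : Continuous g := hf.comp (T n ω).continuous_of_finiteDimensional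
    set c : ℝ := g 0 with hc
    have hnear : ∀ t : W, ‖t‖ ≤ R → |g t - c| ≤ ε/8 := by
      intro t ht
      have hlin : ‖(T n ω).linear t‖ ≤ affLinNorm (T n ω) * ‖t‖ :=
        affLinNorm_mul_bound' _ t
      have h3 : affLinNorm (T n ω) * ‖t‖ < δ := by
        calc affLinNorm (T n ω) * ‖t‖ ≤ affLinNorm (T n ω) * R :=
              mul_le_mul_of_nonneg_left ht (affLinNorm_nonneg' _)
          _ < (δ / R) * R := by exact mul_lt_mul_of_pos_right hω hR0
          _ = δ := div_mul_cancel₀ _ hR0.ne'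
      have hdiff : T n ω t - T n ω 0 = (T n ω).linear t := by
        have := (T n ω).linearMap_vsub t 0
        simpa [vsub_eq_sub] using this.symm
      have hdist : dist (T n ω t) (T n ω 0) < δ := by
        rw [dist_eq_norm, hdiff]; exact lt_of_le_of_lt hlin h3
      have := hδ hdist
      rw [Real.dist_eq] at this
      exact this.le
    -- integral estimate for a probability measure ν
    have main : ∀ (ν : Measure W) [IsProbabilityMeasure ν],
        ν (Metric.closedBall (0:W) R)ᶜ ≤ ENNReal.ofReal (ε/(16*(M+1))) →
        |(∫ t, g t ∂ν) - c| ≤ ε/4 := by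
      intro ν _ hν
      have hint : Integrable g ν :=
        (integrable_const M).mono' hg_cont.aestronglyMeasurable
          (ae_of_all _ fun t => hM _)
      have hint2 : Integrable (fun t => g t - c) ν := hint.sub (integrable_const c)
      have h4 : (∫ t, g t ∂ν) - c = ∫ t, (g t - c) ∂ν := by
        rw [integral_sub hint (integrable_const c), integral_const]
        simp
      rw [h4]
      have habs : |∫ t, (g t - c) ∂ν| ≤ ∫ t, |g t - c| ∂ν := by
        simpa [Real.norm_eq_abs] using norm_integral_le_integral_norm (fun t => g t - c) (μ := ν)
      have hbd : ∀ t : W, |g t - c| ≤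
          Set.indicator (Metric.closedBall (0:W) R)ᶜ (fun _ => 2*M) t + ε/8 := by
        intro t
        by_cases ht : t ∈ Metric.closedBall (0:W) R
        · have : ‖t‖ ≤ R := by simpa [Metric.mem_closedBall, dist_zero_right] using ht
          have := hnear t this
          rw [Set.indicator_of_notMem (by simpa using ht)]
          linarith
        · rw [Set.indicator_of_mem (by simpa using ht)]
          have := abs_sub_abs_le_abs_sub (g t) c
          have h5 : |g t| ≤ M := by simpa [Real.norm_eq_abs] using hM (T n ω t)
          have h6 : |c| ≤ M := by simpa [Real.norm_eq_abs] using hM (T n ω 0)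
          have := abs_sub (g t) c
          calc |g t - c| ≤ |g t| + |c| := abs_sub _ _
            _ ≤ 2*M + ε/8 := by linarith
      have hintb : Integrable (fun t =>
          Set.indicator (Metric.closedBall (0:W) R)ᶜ (fun _ => 2*M) t + ε/8) ν :=
        ((integrable_const (2*M)).indicator measurableSet_closedBall.compl).add
          (integrable_const _)
      have h7 : ∫ t, |g t - c| ∂ν ≤ ∫ t,
          (Set.indicator (Metric.closedBall (0:W) R)ᶜ (fun _ => 2*M) t + ε/8) ∂ν :=
        integral_mono hint2.abs hintb hbd
      have h8 : ∫ t, (Set.indicator (Metric.closedBall (0:W) R)ᶜ (fun _ => 2*M) t + ε/8) ∂ν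
          = 2*M * (ν (Metric.closedBall (0:W) R)ᶜ).toReal + ε/8 := by
        rw [integral_add ((integrable_const (2*M)).indicator
          measurableSet_closedBall.compl) (integrable_const _),
          integral_indicator_const _ measurableSet_closedBall.compl, integral_const]
        simp [mul_comm, measureReal_def]
      have h9 : (ν (Metric.closedBall (0:W) R)ᶜ).toReal ≤ ε/(16*(M+1)) :=
        ENNReal.toReal_le_of_le_ofReal hεM.le hν
      have h10 : 2*M * (ν (Metric.closedBall (0:W) R)ᶜ).toReal ≤ ε/8 := by
        have h11 : 2*M * (ν (Metric.closedBall (0:W) R)ᶜ).toReal ≤ 2*M * (ε/(16*(M+1))) :=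
          mul_le_mul_of_nonneg_left h9 (by linarith)
        have h12 : 2*M * (ε/(16*(M+1))) ≤ ε/8 := by
          rw [show 2*M * (ε/(16*(M+1))) = 2*M*ε/(16*(M+1)) by ring,
            div_le_div_iff₀ (by positivity : (0:ℝ) < 16*(M+1)) (by norm_num : (0:ℝ) < 8)]
          nlinarith [hε.le, hM0]
        linarith
      calc |∫ t, (g t - c) ∂ν| ≤ ∫ t, |g t - c| ∂ν := habs
        _ ≤ 2*M * (ν (Metric.closedBall (0:W) R)ᶜ).toReal + ε/8 := h8 ▸ h7
        _ ≤ ε/8 + ε/8 := by linarith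
        _ = ε/4 := by ring
    have m1 := main ν₁ hRν₁
    have m2 := main ν₂ hRν₂
    calc |(∫ t, g t ∂ν₁) - ∫ t, g t ∂ν₂|
        ≤ |(∫ t, g t ∂ν₁) - c| + |c - ∫ t, g t ∂ν₂| := abs_sub_le _ _ _
      _ ≤ ε/4 + ε/4 := by rw [abs_sub_comm c]; exact add_le_add m1 m2
      _ = ε/2 := by ring
  -- global bound on the difference of integrals
  have glob : ∀ n, ∀ ω : Ω,
      |(∫ t, f (T n ω t) ∂ν₁) - ∫ t, f (T n ω t) ∂ν₂| ≤ 2*M := by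
    intro n ω
    have b : ∀ (ν : Measure W) [IsProbabilityMeasure ν], |∫ t, f (T n ω t) ∂ν| ≤ M := by
      intro ν _
      have := norm_integral_le_of_norm_le_const (μ := ν)
        (f := fun t => f (T n ω t)) (C := M) (ae_of_all _ fun t => hM _)
      simpa [Real.norm_eq_abs, measure_univ] using this
    calc |(∫ t, f (T n ω t) ∂ν₁) - ∫ t, f (T n ω t) ∂ν₂|
        ≤ |∫ t, f (T n ω t) ∂ν₁| + |∫ t, f (T n ω t) ∂ν₂| := abs_sub _ _
      _ ≤ M + M := add_le_add (b ν₁) (b ν₂)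
      _ = 2*M := by ring
  -- use hT to conclude
  have hδR : (0:ℝ) < δ / R := by positivity
  have hTp := (hT (δ/R) hδR).eventually_lt_const
    (ENNReal.ofReal_pos.2 (show (0:ℝ) < ε/(4*(M+1)) by positivity))
  obtain ⟨N, hN⟩ := eventually_atTop.1 hTp
  refine ⟨N, fun n hn => ?_⟩
  set I : ℝ := ∫ ω, |(∫ t, f (T n ω t) ∂ν₁) - ∫ t, f (T n ω t) ∂ν₂| ∂P with hI
  have hInonneg : 0 ≤ I := integral_nonneg fun ω => abs_nonneg _
  rw [Real.dist_eq, sub_zero, abs_of_nonneg hInonneg]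
  set bad : Set Ω := {ω | δ/R ≤ affLinNorm (T n ω)} with hbad
  have hPbad : P bad < ENNReal.ofReal (ε/(4*(M+1))) := hN n hn
  by_cases hIint : Integrable
      (fun ω => |(∫ t, f (T n ω t) ∂ν₁) - ∫ t, f (T n ω t) ∂ν₂|) P
  · have heq : I = (∫⁻ ω, ENNReal.ofReal
        |(∫ t, f (T n ω t) ∂ν₁) - ∫ t, f (T n ω t) ∂ν₂| ∂P).toReal :=
      integral_eq_lintegral_of_nonneg_ae (ae_of_all _ fun ω => abs_nonneg _)
        hIint.aestronglyMeasurable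
    set bad' : Set Ω := toMeasurable P bad with hbad'
    have hsub : bad ⊆ bad' := subset_toMeasurable P bad
    have hmb : MeasurableSet bad' := measurableSet_toMeasurable P bad
    have hmeas : P bad' = P bad := measure_toMeasurable bad
    have hptw : ∀ ω, ENNReal.ofReal
        |(∫ t, f (T n ω t) ∂ν₁) - ∫ t, f (T n ω t) ∂ν₂| ≤
        Set.indicator bad' (fun _ => ENNReal.ofReal (2*M)) ω + ENNReal.ofReal (ε/2) := by
      intro ω
      by_cases hωb : ω ∈ bad
      · rw [Set.indicator_of_mem (hsub hωb)]
        exact le_trans (ENNReal.ofReal_le_ofReal (glob n ω)) le_self_add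
      · have hgood : affLinNorm (T n ω) < δ/R := lt_of_not_ge hωb
        exact le_trans (ENNReal.ofReal_le_ofReal (key n ω hgood)) le_add_self
    have hlint : (∫⁻ ω, ENNReal.ofReal
        |(∫ t, f (T n ω t) ∂ν₁) - ∫ t, f (T n ω t) ∂ν₂| ∂P) ≤
        ENNReal.ofReal (2*M) * P bad + ENNReal.ofReal (ε/2) := by
      calc (∫⁻ ω, ENNReal.ofReal
            |(∫ t, f (T n ω t) ∂ν₁) - ∫ t, f (T n ω t) ∂ν₂| ∂P)
          ≤ ∫⁻ ω, (Set.indicator bad' (fun _ => ENNReal.ofReal (2*M)) ω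
              + ENNReal.ofReal (ε/2)) ∂P := lintegral_mono hptw
        _ = (∫⁻ ω, Set.indicator bad' (fun _ => ENNReal.ofReal (2*M)) ω ∂P)
              + ENNReal.ofReal (ε/2) := by
            rw [lintegral_add_right _ measurable_const, lintegral_const]
            simp [measure_univ]
        _ = ENNReal.ofReal (2*M) * P bad' + ENNReal.ofReal (ε/2) := by
            rw [lintegral_indicator_const hmb]
        _ = ENNReal.ofReal (2*M) * P bad + ENNReal.ofReal (ε/2) := by rw [hmeas]
    have hfin : ENNReal.ofReal (2*M) * P bad + ENNReal.ofReal (ε/2) ≠ ⊤ := by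
      apply ENNReal.add_ne_top.2
      exact ⟨ENNReal.mul_ne_top ENNReal.ofReal_ne_top (measure_ne_top _ _),
        ENNReal.ofReal_ne_top⟩
    have hIle : I ≤ (ENNReal.ofReal (2*M) * P bad + ENNReal.ofReal (ε/2)).toReal := by
      rw [heq]
      exact ENNReal.toReal_mono hfin hlint
    have hPreal : (P bad).toReal ≤ ε/(4*(M+1)) :=
      ENNReal.toReal_le_of_le_ofReal (by positivity) hPbad.le
    have htr : (ENNReal.ofReal (2*M) * P bad + ENNReal.ofReal (ε/2)).toReal
        = 2*M * (P bad).toReal + ε/2 := by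
      rw [ENNReal.toReal_add (ENNReal.mul_ne_top ENNReal.ofReal_ne_top (measure_ne_top _ _))
        ENNReal.ofReal_ne_top, ENNReal.toReal_mul, ENNReal.toReal_ofReal (by linarith),
        ENNReal.toReal_ofReal (by linarith)]
    have h13 : 2*M * (P bad).toReal ≤ 2*M * (ε/(4*(M+1))) :=
      mul_le_mul_of_nonneg_left hPreal (by linarith)
    have h14 : 2*M * (ε/(4*(M+1))) < ε/2 := by
      rw [show 2*M * (ε/(4*(M+1))) = 2*M*ε/(4*(M+1)) by ring,
        div_lt_div_iff₀ (by positivity : (0:ℝ) < 4*(M+1)) (by norm_num : (0:ℝ) < 2)]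
      nlinarith [hε, hM0]
    calc I ≤ 2*M * (P bad).toReal + ε/2 := htr ▸ hIle
      _ < ε/2 + ε/2 := by linarith
      _ = ε := by ring
  · rw [hI, integral_undef hIint]
    exact hε

end
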